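/- Let 𝒲 be a complex-linear, self-adjoint, traceless endomorphism of a 3-dimensional complex vector space with inner product (the self-dual Weyl operator), and set a = Tr 𝒲², b = Tr 𝒲³. Then 𝒲 has exactly two distinct eigenvalues with the double eigenvalue nonzero (i.e. eigenvalues ρ, ρ, -2ρ with ρ ≠ 0, Petrov type D) if and only if a ≠ 0 and 𝒲² - (b/a)𝒲 - (a/3) Id = 0. -/

import Mathlib

noncomputable section

open Matrix

lemma ch3 (W : Matrix (Fin 3) (Fin 3) ℂ) :
    W * W * W - Matrix.trace W • (W * W)
      + (((Matrix.trace W)^2 - Matrix.trace (W * W)) / 2) • W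
      - W.det • (1 : Matrix (Fin 3) (Fin 3) ℂ) = 0 := by
  ext i j
  fin_cases i <;> fin_cases j <;>
    · simp [Matrix.mul_apply, Matrix.trace, Matrix.diag, Matrix.det_fin_three,
        Fin.sum_univ_succ, Matrix.one_apply]
      ring

/-- a traceless self-adjoint operator 𝒲 on ℂ³ has exactly two distinct
eigenvalues ρ, ρ, -2ρ with ρ ≠ 0 (Petrov type D) iff a = Tr 𝒲² ≠ 0 and
𝒲² - (b/a)𝒲 - (a/3)Id = 0, where b = Tr 𝒲³. -/
theorem stmt13 (W : Matrix (Fin 3) (Fin 3) ℂ) (hsym : Wᵀ = W)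
    (htr : Matrix.trace W = 0) :
    (∃ ρ : ℂ, ρ ≠ 0 ∧ (W - ρ • (1 : Matrix (Fin 3) (Fin 3) ℂ)) * (W + (2 * ρ) • 1) = 0) ↔
    (Matrix.trace (W * W) ≠ 0 ∧
      W * W - (Matrix.trace (W * W * W) / Matrix.trace (W * W)) • W
        - (Matrix.trace (W * W) / 3) • (1 : Matrix (Fin 3) (Fin 3) ℂ) = 0) := by
  constructor
  · rintro ⟨ρ, hρ, h⟩
    have expand : (W - ρ • (1 : Matrix (Fin 3) (Fin 3) ℂ)) * (W + (2 * ρ) • 1)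
        = W * W + ρ • W - (2 * ρ ^ 2) • 1 := by
      simp only [sub_mul, mul_add, Matrix.smul_mul, Matrix.mul_smul, smul_smul, one_mul, mul_one]
      module
    rw [expand] at h
    have hq : W * W = (2 * ρ ^ 2) • (1 : Matrix (Fin 3) (Fin 3) ℂ) - ρ • W :=
      eq_sub_of_add_eq (sub_eq_zero.mp h)
    have ha : Matrix.trace (W * W) = 6 * ρ ^ 2 := by
      rw [hq]
      simp [Matrix.trace_sub, Matrix.trace_smul, Matrix.trace_one, htr]
      ring
    have h3 : W * W * W = (3 * ρ ^ 2) • W - (2 * ρ ^ 3) • 1 := by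
      rw [show W * W * W = (W * W) * W from rfl, hq, sub_mul, Matrix.smul_mul,
        Matrix.smul_mul, one_mul, hq]
      module
    have hb : Matrix.trace (W * W * W) = -6 * ρ ^ 3 := by
      rw [h3]
      simp [Matrix.trace_sub, Matrix.trace_smul, Matrix.trace_one, htr]
      ring
    have ha' : Matrix.trace (W * W) ≠ 0 := by
      rw [ha]; exact mul_ne_zero (by norm_num) (pow_ne_zero 2 hρ)
    refine ⟨ha', ?_⟩
    have e1 : Matrix.trace (W * W * W) / Matrix.trace (W * W) = -ρ := by
      rw [ha, hb]; field_simp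
    have e2 : Matrix.trace (W * W) / 3 = 2 * ρ ^ 2 := by
      rw [ha]; ring
    rw [e1, e2, hq]
    module
  · rintro ⟨h1, h2⟩
    set a := Matrix.trace (W * W) with ha_def
    set c := Matrix.trace (W * W * W) / a with hc_def
    have hq : W * W = c • W + (a / 3) • (1 : Matrix (Fin 3) (Fin 3) ℂ) := by
      have := sub_eq_zero.mp h2
      rw [sub_eq_iff_eq_add] at this
      rw [this]; module
    have h3 : W * W * W = (c ^ 2 + a / 3) • W + (c * (a / 3)) • (1 : Matrix (Fin 3) (Fin 3) ℂ) := by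
      rw [show W * W * W = (W * W) * W from rfl, hq, add_mul, Matrix.smul_mul,
        Matrix.smul_mul, one_mul, hq]
      module
    have hch := ch3 W
    rw [htr] at hch
    have e : (c ^ 2 - a / 6) • W - (W.det - c * (a / 3)) • (1 : Matrix (Fin 3) (Fin 3) ℂ)
        = (W * W * W - (0 : ℂ) • (W * W) + (((0 : ℂ) ^ 2 - a) / 2) • W - W.det • 1)
          - (W * W * W - ((c ^ 2 + a / 3) • W + (c * (a / 3)) • (1 : Matrix (Fin 3) (Fin 3) ℂ))) := by
      module
    rw [hch, sub_eq_zero_of_eq h3] at e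
    have hk : (c ^ 2 - a / 6) • W = (W.det - c * (a / 3)) • (1 : Matrix (Fin 3) (Fin 3) ℂ) := by
      have := e
      rw [sub_zero] at this
      exact sub_eq_zero.mp this
    by_cases hc : c ^ 2 - a / 6 = 0
    · have hc' : c ^ 2 = a / 6 := by linear_combination hc
      refine ⟨-c, ?_, ?_⟩
      · intro h0
        apply h1
        have hcz : c = 0 := by simpa using neg_eq_zero.mp h0
        rw [hcz] at hc'
        have h6 : a / 6 = 0 := by rw [← hc']; ring
        field_simp at h6
        simpa using h6
      · have expand : (W - (-c) • (1 : Matrix (Fin 3) (Fin 3) ℂ)) * (W + (2 * -c) • 1)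
            = W * W - c • W - (2 * c ^ 2) • 1 := by
          simp only [sub_mul, mul_add, Matrix.smul_mul, Matrix.mul_smul, smul_smul, one_mul, mul_one]
          module
        rw [expand]
        have e3 : (2 * c ^ 2 : ℂ) = a / 3 := by rw [hc']; ring
        rw [e3]
        exact h2
    · exfalso
      have t := congrArg Matrix.trace hk
      simp only [Matrix.trace_smul, htr, Matrix.trace_one, smul_eq_mul, mul_zero] at t
      have hm : W.det - c * (a / 3) = 0 := by
        simp only [Fintype.card_fin, Nat.cast_ofNat] at t
        have h3' : (W.det - c * (a / 3)) * 3 = 0 := t.symm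
        have := mul_eq_zero.mp h3'
        simpa using this
      rw [hm, zero_smul] at hk
      have hw : W = 0 := (smul_eq_zero.mp hk).resolve_left hc
      apply h1
      rw [ha_def, hw]
      simp
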